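/- The edge of the wedge W₀ lies inside W_R: fix s > 0 and set c := √(1+s²), f₊ := (1, c, 0, …, 0, s), f₋ := (−1, c, 0, …, 0, s). For every σ = (σ₂, …, σ_{n−1}) ∈ ℝ^{n−2} (for n = 2 there is no σ-component), the point x_σ := (0, s·√(1+|σ|²), σ₂, …, σ_{n−1}, c·√(1+|σ|²)) satisfies: x_σ ∈ AdS (i.e. x_σ·x_σ = 1), f₊·x_σ = 0 and f₋·x_σ = 0 (x_σ lies on the edge of W₀), and x_σ ∈ W_R. -/

import Mathlib

open Matrix NormedSpace

/-- The diagonal entries of the metric `g = diag(1, −1, …, −1, 1)` on `ℝ^{n+1}`. -/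
def eta (n : ℕ) (i : Fin (n + 1)) : ℝ := if i = 0 ∨ i = Fin.last n then 1 else -1

/-- The ambient bilinear form `x·y = x₀y₀ − x₁y₁ − ⋯ − x_{n−1}y_{n−1} + x_ny_n`. -/
def mdot (n : ℕ) (x y : Fin (n + 1) → ℝ) : ℝ := ∑ i, eta n i * x i * y i

/-- Anti–de Sitter space: the quadric `{x ∈ ℝ^{n+1} : x·x = 1}`. -/
def AdS (n : ℕ) : Set (Fin (n + 1) → ℝ) := {x | mdot n x x = 1}

/-- The right wedge `W_R = {x ∈ AdS : x₁ > |x₀|, xₙ > 0}`. -/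
def WR (n : ℕ) : Set (Fin (n + 1) → ℝ) :=
  {x | x ∈ AdS n ∧ |x 0| < x 1 ∧ 0 < x (Fin.last n)}

/-- The opposite wedge `W_R′ = {x ∈ AdS : −x₁ > |x₀|, xₙ > 0}`. -/
def WRp (n : ℕ) : Set (Fin (n + 1) → ℝ) :=
  {x | x ∈ AdS n ∧ |x 0| < -x 1 ∧ 0 < x (Fin.last n)}

/-- The conjugate wedge `W̃_R = {x ∈ AdS : −x₁ > |x₀|, xₙ < 0}`. -/
def WtR (n : ℕ) : Set (Fin (n + 1) → ℝ) :=
  {x | x ∈ AdS n ∧ |x 0| < -x 1 ∧ x (Fin.last n) < 0}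

/-- The conjugate opposite wedge `W̃_R′ = {x ∈ AdS : x₁ > |x₀|, xₙ < 0}`. -/
def WtRp (n : ℕ) : Set (Fin (n + 1) → ℝ) :=
  {x | x ∈ AdS n ∧ |x 0| < x 1 ∧ x (Fin.last n) < 0}

/-- The matrix unit `E_{μν}`. -/
noncomputable def E (n : ℕ) (μ ν : Fin (n + 1)) : Matrix (Fin (n + 1)) (Fin (n + 1)) ℝ :=
  Matrix.single μ ν 1

/-- `K₀₁ = E₀₁ + E₁₀`, generator of the boost in the 0–1–plane. -/
noncomputable def K01 (n : ℕ) : Matrix (Fin (n + 1)) (Fin (n + 1)) ℝ := E n 0 1 + E n 1 0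

/-- The metric matrix `g = diag(1, −1, …, −1, 1)`. -/
noncomputable def gMat (n : ℕ) : Matrix (Fin (n + 1)) (Fin (n + 1)) ℝ :=
  Matrix.diagonal (eta n)

/-- The lightlike vector `f₊ = (1, c, 0, …, 0, s)` (with `c = √(1+s²)`). -/
noncomputable def fplus (n : ℕ) (s : ℝ) : Fin (n + 1) → ℝ := fun i =>
  if i = 0 then 1 else if i = 1 then Real.sqrt (1 + s ^ 2)
  else if i = Fin.last n then s else 0

/-- The lightlike vector `f₋ = (−1, c, 0, …, 0, s)` (with `c = √(1+s²)`). -/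
noncomputable def fminus (n : ℕ) (s : ℝ) : Fin (n + 1) → ℝ := fun i =>
  if i = 0 then -1 else if i = 1 then Real.sqrt (1 + s ^ 2)
  else if i = Fin.last n then s else 0

/-- The wedge `W₀ = {x ∈ AdS : f₊·x < 0, f₋·x < 0, xₙ > 0}`. -/
noncomputable def W0 (n : ℕ) (s : ℝ) : Set (Fin (n + 1) → ℝ) :=
  {x | x ∈ AdS n ∧ mdot n (fplus n s) x < 0 ∧ mdot n (fminus n s) x < 0 ∧
    0 < x (Fin.last n)}

/-- `|σ|²` for a vector `σ` of middle components (indices `2, …, n−1`). -/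
noncomputable def sigmaNormSq (n : ℕ) (σ : Fin (n + 1) → ℝ) : ℝ :=
  ∑ i ∈ Finset.univ.filter (fun i : Fin (n + 1) => ¬(i = 0 ∨ i = 1 ∨ i = Fin.last n)),
    σ i ^ 2

/-- The edge point `x_σ = (0, s√(1+|σ|²), σ₂, …, σ_{n−1}, c√(1+|σ|²))`. -/
noncomputable def edgePoint (n : ℕ) (s : ℝ) (σ : Fin (n + 1) → ℝ) : Fin (n + 1) → ℝ :=
  fun i =>
    if i = 0 then 0
    else if i = 1 then s * Real.sqrt (1 + sigmaNormSq n σ)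
    else if i = Fin.last n then Real.sqrt (1 + s ^ 2) * Real.sqrt (1 + sigmaNormSq n σ)
    else σ i

/-- The edge of the wedge `W₀` lies inside `W_R`: for every choice of middle components
`σ ∈ ℝ^{n−2}`, the point `x_σ` lies on AdS, is orthogonal to both lightlike vectors
`f₊, f₋` (so it lies on the edge of `W₀`), and belongs to `W_R`. -/
theorem edge_of_W0_in_WR (n : ℕ) (hn : 2 ≤ n) (s : ℝ) (hs : 0 < s)
    (σ : Fin (n + 1) → ℝ) :
    edgePoint n s σ ∈ AdS n ∧
    mdot n (fplus n s) (edgePoint n s σ) = 0 ∧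
    mdot n (fminus n s) (edgePoint n s σ) = 0 ∧
    edgePoint n s σ ∈ WR n := by
  have hv1 : ((1 : Fin (n+1)) : ℕ) = 1 := by
    rw [Fin.val_one']; exact Nat.mod_eq_of_lt (by omega)
  have h01 : (0 : Fin (n+1)) ≠ 1 := by
    intro h; have := congrArg Fin.val h; rw [Fin.val_zero, hv1] at this; omega
  have hl0 : Fin.last n ≠ 0 := by
    intro h; have := congrArg Fin.val h; simp [Fin.last] at this; omega
  have hl1 : Fin.last n ≠ 1 := by
    intro h; have := congrArg Fin.val h; rw [Fin.val_last, hv1] at this; omega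
  have hsplit : ∀ t : Fin (n+1) → ℝ,
      ∑ i, t i = t 0 + t 1 + t (Fin.last n)
        + ∑ i ∈ Finset.univ.filter
            (fun i : Fin (n+1) => ¬(i = 0 ∨ i = 1 ∨ i = Fin.last n)), t i := by
    intro t
    rw [← Finset.sum_filter_add_sum_filter_not Finset.univ
      (fun i : Fin (n+1) => i = 0 ∨ i = 1 ∨ i = Fin.last n) t]
    congr 1
    have : Finset.univ.filter (fun i : Fin (n+1) => i = 0 ∨ i = 1 ∨ i = Fin.last n)
        = {0, 1, Fin.last n} := by ext i; simp
    rw [this, Finset.sum_insert (by simp [h01, hl0.symm]),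
      Finset.sum_insert (by simp [hl1.symm]), Finset.sum_singleton]
    ring
  set S := sigmaNormSq n σ with hSdef
  have hS : 0 ≤ S := Finset.sum_nonneg fun i _ => sq_nonneg _
  set c := Real.sqrt (1 + s ^ 2) with hc
  set r := Real.sqrt (1 + S) with hr
  have hc2 : c ^ 2 = 1 + s ^ 2 := Real.sq_sqrt (by positivity)
  have hr2 : r ^ 2 = 1 + S := Real.sq_sqrt (by linarith)
  have hcpos : 0 < c := Real.sqrt_pos.2 (by positivity)
  have hrpos : 0 < r := Real.sqrt_pos.2 (by linarith)
  have hx0 : edgePoint n s σ 0 = 0 := by simp [edgePoint]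
  have hx1 : edgePoint n s σ 1 = s * r := by
    simp [edgePoint, h01.symm, ← hSdef, ← hr]
  have hxl : edgePoint n s σ (Fin.last n) = c * r := by
    simp [edgePoint, hl0, hl1, ← hSdef, ← hr, ← hc]
  have hxi : ∀ i : Fin (n+1), i ≠ 0 → i ≠ 1 → i ≠ Fin.last n →
      edgePoint n s σ i = σ i := by
    intro i h1 h2 h3; simp [edgePoint, h1, h2, h3]
  have heta0 : eta n 0 = 1 := by simp [eta]
  have heta1 : eta n 1 = -1 := by simp [eta, h01.symm, hl1.symm]
  have hetal : eta n (Fin.last n) = 1 := by simp [eta]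
  have hetai : ∀ i : Fin (n+1), i ≠ 0 → i ≠ Fin.last n → eta n i = -1 := by
    intro i h1 h2; simp [eta, h1, h2]
  -- orthogonality
  have hfp0 : fplus n s 0 = 1 := by simp [fplus]
  have hfp1 : fplus n s 1 = c := by simp [fplus, h01.symm, ← hc]
  have hfpl : fplus n s (Fin.last n) = s := by simp [fplus, hl0, hl1]
  have hfm0 : fminus n s 0 = -1 := by simp [fminus]
  have hfm1 : fminus n s 1 = c := by simp [fminus, h01.symm, ← hc]
  have hfml : fminus n s (Fin.last n) = s := by simp [fminus, hl0, hl1]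
  have hrestp : ∑ i ∈ Finset.univ.filter
      (fun i : Fin (n+1) => ¬(i = 0 ∨ i = 1 ∨ i = Fin.last n)),
      eta n i * fplus n s i * edgePoint n s σ i = 0 := by
    apply Finset.sum_eq_zero
    intro i hi
    simp only [Finset.mem_filter, Finset.mem_univ, true_and, not_or] at hi
    simp [fplus, hi.1, hi.2.1, hi.2.2]
  have hrestm : ∑ i ∈ Finset.univ.filter
      (fun i : Fin (n+1) => ¬(i = 0 ∨ i = 1 ∨ i = Fin.last n)),
      eta n i * fminus n s i * edgePoint n s σ i = 0 := by
    apply Finset.sum_eq_zero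
    intro i hi
    simp only [Finset.mem_filter, Finset.mem_univ, true_and, not_or] at hi
    simp [fminus, hi.1, hi.2.1, hi.2.2]
  have hAdS : edgePoint n s σ ∈ AdS n := by
    show mdot n _ _ = 1
    rw [mdot, hsplit]
    have hrest : ∑ i ∈ Finset.univ.filter
        (fun i : Fin (n+1) => ¬(i = 0 ∨ i = 1 ∨ i = Fin.last n)),
        eta n i * edgePoint n s σ i * edgePoint n s σ i = -S := by
      rw [hSdef, sigmaNormSq, ← Finset.sum_neg_distrib]
      apply Finset.sum_congr rfl
      intro i hi
      simp only [Finset.mem_filter, Finset.mem_univ, true_and, not_or] at hi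
      rw [hxi i hi.1 hi.2.1 hi.2.2, hetai i hi.1 hi.2.2]
      ring
    rw [hrest, hx0, hx1, hxl, heta0, heta1, hetal]
    nlinarith [hc2, hr2]
  refine ⟨hAdS, ?_, ?_, hAdS, ?_, ?_⟩
  · rw [mdot, hsplit, hrestp, hx0, hx1, hxl, heta0, heta1, hetal, hfp0, hfp1, hfpl]
    ring
  · rw [mdot, hsplit, hrestm, hx0, hx1, hxl, heta0, heta1, hetal, hfm0, hfm1, hfml]
    ring
  · rw [hx0, hx1]
    simpa using mul_pos hs hrpos
  · rw [hxl]; exact mul_pos hcpos hrpos
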